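/- Let S = diag(s₁,s₂,s₃) and S' = diag(s₁',s₂',s₃') both satisfy the proper ordering s₁ ≥ s₂ ≥ |s₃| ≥ 0, and let dᵢ(·) be the diagonal entries of the first moment of the corresponding matrix Fisher distributions. Fix a cyclic permutation (i,j,k) of (1,2,3). If s_k' = s_k, sᵢ' − sⱼ' = sᵢ − sⱼ, and sᵢ' + sⱼ' > sᵢ + sⱼ, then dᵢ(S') + dⱼ(S') > dᵢ(S) + dⱼ(S); that is, dᵢ + dⱼ is strictly increasing in sᵢ + sⱼ when sᵢ − sⱼ and s_k are held fixed. -/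

import Mathlib

open MeasureTheory Matrix

noncomputable section

/-- The space of real `3 × 3` matrices. -/
abbrev M3 := Matrix (Fin 3) (Fin 3) ℝ

instance : MeasurableSpace M3 := (inferInstance : MeasurableSpace (Fin 3 → Fin 3 → ℝ))

/-- The special orthogonal group `SO(3)`: real `3 × 3` matrices `R` with
`Rᵀ R = 1` and `det R = 1`. -/
def SO3 : Set M3 := {R | Rᵀ * R = 1 ∧ R.det = 1}

/-- `μ` is the Haar probability measure of the compact group `SO(3)`, viewed as a measure
on the ambient space of `3 × 3` matrices: it is a probability measure carried by `SO3`
which is invariant under left and right translation by elements of `SO3`. -/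
structure IsHaarSO3 (μ : Measure M3) : Prop where
  prob : IsProbabilityMeasure μ
  carried : μ SO3ᶜ = 0
  map_left : ∀ U ∈ SO3, Measure.map (fun R => U * R) μ = μ
  map_right : ∀ V ∈ SO3, Measure.map (fun R => R * V) μ = μ

/-- The normalizing constant `c(S)` of the matrix Fisher distribution with diagonal
parameter `S = diag s`. -/
def cS (μ : Measure M3) (s : Fin 3 → ℝ) : ℝ :=
  ∫ Q, Real.exp ((Matrix.diagonal s * Q).trace) ∂μ

/-- The matrix Fisher density `p_S(Q) = exp(tr(S Q)) / c(S)` with diagonal parameter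
`S = diag s`. -/
def pS (μ : Measure M3) (s : Fin 3 → ℝ) (Q : M3) : ℝ :=
  Real.exp ((Matrix.diagonal s * Q).trace) / cS μ s

/-- `dᵢ(S)`: the `i`-th diagonal entry of the first moment `E[Q]` of the matrix Fisher
distribution `M(S)` with `S = diag s`. -/
def dS (μ : Measure M3) (s : Fin 3 → ℝ) (i : Fin 3) : ℝ :=
  ∫ Q, Q i i * pS μ s Q ∂μ

instance : BorelSpace M3 := ⟨(inferInstance : BorelSpace (Fin 3 → Fin 3 → ℝ)).measurable_eq⟩

lemma SO3_entry_le {R : M3} (hR : R ∈ SO3) (a b : Fin 3) : |R a b| ≤ 1 := by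
  have h1 : (Rᵀ * R) b b = 1 := by rw [hR.1]; simp [Matrix.one_apply]
  have h2 : ∑ l, R l b ^ 2 = 1 := by
    rw [← h1]; simp [Matrix.mul_apply, Matrix.transpose_apply, sq]
  have h3 : R a b ^ 2 ≤ 1 := by
    rw [← h2]
    exact Finset.single_le_sum (f := fun l => R l b ^ 2) (fun l _ => sq_nonneg _) (Finset.mem_univ a)
  exact (sq_le_one_iff_abs_le_one _).mp h3

lemma one_mem_SO3 : (1 : M3) ∈ SO3 := by constructor <;> simp [SO3]

lemma mul_mem_SO3 {A B : M3} (hA : A ∈ SO3) (hB : B ∈ SO3) : A * B ∈ SO3 := by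
  obtain ⟨hA1, hA2⟩ := hA; obtain ⟨hB1, hB2⟩ := hB
  constructor
  · rw [Matrix.transpose_mul]
    calc Bᵀ * Aᵀ * (A * B) = Bᵀ * (Aᵀ * A) * B := by
          rw [Matrix.mul_assoc, Matrix.mul_assoc, Matrix.mul_assoc]
    _ = 1 := by rw [hA1, Matrix.mul_one, hB1]
  · rw [Matrix.det_mul, hA2, hB2, one_mul]

lemma transpose_mem_SO3 {A : M3} (hA : A ∈ SO3) : Aᵀ ∈ SO3 := by
  obtain ⟨hA1, hA2⟩ := hA
  have h : A * Aᵀ = 1 := mul_eq_one_comm.mp hA1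
  exact ⟨by simpa using h, by simpa [Matrix.det_transpose] using hA2⟩

lemma isCompact_SO3 : IsCompact SO3 := by
  have hclosed : IsClosed SO3 := by
    have h1 : IsClosed {R : M3 | Rᵀ * R = 1} :=
      isClosed_eq (by exact (continuous_id.matrix_transpose.matrix_mul continuous_id)) continuous_const
    have h2 : IsClosed {R : M3 | R.det = 1} :=
      isClosed_eq continuous_id.matrix_det continuous_const
    exact h1.inter h2
  have h1 : IsCompact (Set.univ.pi fun _ : Fin 3 => Set.Icc (-1:ℝ) 1) :=
    isCompact_univ_pi (fun _ => isCompact_Icc)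
  have h2 : IsCompact (Set.univ.pi fun _ : Fin 3 =>
      (Set.univ.pi fun _ : Fin 3 => Set.Icc (-1:ℝ) 1)) :=
    isCompact_univ_pi (fun _ => h1)
  refine h2.of_isClosed_subset hclosed ?_
  intro R hR
  intro a _
  intro b _
  have := SO3_entry_le hR a b
  exact abs_le.mp this

lemma isClosed_SO3 : IsClosed SO3 :=
  ((isClosed_eq (continuous_id.matrix_transpose.matrix_mul continuous_id) continuous_const).inter
    (isClosed_eq continuous_id.matrix_det continuous_const))

lemma SO3_measure_one (μ : Measure M3) (hμ : IsHaarSO3 μ) : μ SO3 = 1 := by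
  haveI := hμ.prob
  have h := measure_add_measure_compl (μ := μ)
    (s := SO3) isClosed_SO3.measurableSet
  rw [hμ.carried, add_zero] at h
  rw [h]; exact measure_univ

lemma haar_open_pos (μ : Measure M3) (hμ : IsHaarSO3 μ) {V : Set M3} (hV : IsOpen V)
    (hne : (V ∩ SO3).Nonempty) : μ V ≠ 0 := by
  obtain ⟨q, hqV, hqS⟩ := hne
  intro h0
  set U : SO3 → Set M3 := fun p => (fun R => ((p : M3) * qᵀ) * R) '' V with hU
  have hinv : ∀ (A : M3), A ∈ SO3 → (fun R => A * R) '' V = (fun R => Aᵀ * R) ⁻¹' V := by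
    intro A hA
    have h1 : Aᵀ * A = 1 := hA.1
    have h2 : A * Aᵀ = 1 := mul_eq_one_comm.mp h1
    ext R
    constructor
    · rintro ⟨x, hx, rfl⟩
      simpa [Set.mem_preimage, ← Matrix.mul_assoc, h1] using hx
    · intro hR
      exact ⟨Aᵀ * R, hR, by show A * (Aᵀ * R) = R; rw [← Matrix.mul_assoc, h2, Matrix.one_mul]⟩
  have hmemS : ∀ p : SO3, ((p : M3) * qᵀ) ∈ SO3 := fun p =>
    mul_mem_SO3 p.2 (transpose_mem_SO3 hqS)
  have hopen : ∀ p : SO3, IsOpen (U p) := by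
    intro p
    show IsOpen ((fun R => ((p : M3) * qᵀ) * R) '' V)
    rw [hinv _ (hmemS p)]
    exact hV.preimage (continuous_const.matrix_mul continuous_id)
  have hcover : SO3 ⊆ ⋃ p : SO3, U p := by
    intro p hp
    refine Set.mem_iUnion.mpr ⟨⟨p, hp⟩, ⟨q, hqV, ?_⟩⟩
    show p * qᵀ * q = p
    rw [Matrix.mul_assoc, hqS.1, Matrix.mul_one]
  obtain ⟨t, ht⟩ := isCompact_SO3.elim_finite_subcover U hopen hcover
  have hUzero : ∀ p : SO3, μ (U p) = 0 := by
    intro p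
    have hA := hmemS p
    have hmap := hμ.map_left _ (transpose_mem_SO3 hA)
    have hmeas : Measurable fun R : M3 => ((p : M3) * qᵀ)ᵀ * R :=
      (continuous_const.matrix_mul continuous_id).measurable
    have : μ ((fun R : M3 => ((p : M3) * qᵀ)ᵀ * R) ⁻¹' V) = μ V := by
      conv_rhs => rw [← hmap]
      rw [Measure.map_apply hmeas hV.measurableSet]
    show μ ((fun R => ((p : M3) * qᵀ) * R) '' V) = 0
    rw [hinv _ hA, this, h0]
  have hle : μ SO3 ≤ ∑ p ∈ t, μ (U p) :=
    le_trans (measure_mono ht) (measure_biUnion_finset_le t U)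
  rw [SO3_measure_one μ hμ] at hle
  simp [hUzero] at hle

lemma integrable_cont (μ : Measure M3) (hμ : IsHaarSO3 μ) (g : M3 → ℝ) (hg : Continuous g) :
    Integrable g μ := by
  haveI := hμ.prob
  obtain ⟨C, hC⟩ := isCompact_SO3.exists_bound_of_continuousOn hg.continuousOn
  refine Integrable.mono' (integrable_const C) hg.aestronglyMeasurable ?_
  refine measure_mono_null (fun x hx => ?_) hμ.carried
  intro hxS
  exact hx (hC x hxS)

lemma integral_exp_pos (μ : Measure M3) (hμ : IsHaarSO3 μ) (w : M3 → ℝ) (hw : Continuous w) :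
    0 < ∫ Q, Real.exp (w Q) ∂μ := by
  haveI := hμ.prob
  rw [integral_pos_iff_support_of_nonneg_ae
    (Filter.Eventually.of_forall fun Q => (Real.exp_pos _).le)
    (integrable_cont μ hμ _ hw.rexp)]
  have : Function.support (fun Q => Real.exp (w Q)) = Set.univ :=
    Set.eq_univ_of_forall fun Q => (Real.exp_pos _).ne'
  rw [this]
  simp

lemma key (μ : Measure M3) (hμ : IsHaarSO3 μ) (w f : M3 → ℝ) (hw : Continuous w)
    (hf : Continuous f) (δ : ℝ) (hδ : 0 < δ) (q₁ q₂ : M3) (h₁ : q₁ ∈ SO3) (h₂ : q₂ ∈ SO3)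
    (hlt : f q₂ < f q₁) :
    (∫ Q, f Q * Real.exp (w Q) ∂μ) * (∫ Q, Real.exp (w Q + δ * f Q) ∂μ)
      < (∫ Q, f Q * Real.exp (w Q + δ * f Q) ∂μ) * (∫ Q, Real.exp (w Q) ∂μ) := by
  haveI := hμ.prob
  set A : M3 → ℝ := fun Q => Real.exp (w Q) with hA
  set E : M3 → ℝ := fun Q => Real.exp (w Q + δ * f Q) with hE
  have hwc : Continuous A := hw.rexp
  have hEc : Continuous E := (hw.add (continuous_const.mul hf)).rexp
  have iA : Integrable A μ := integrable_cont μ hμ _ hwc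
  have iE : Integrable E μ := integrable_cont μ hμ _ hEc
  have ifA : Integrable (fun Q => f Q * A Q) μ := integrable_cont μ hμ _ (hf.mul hwc)
  have ifE : Integrable (fun Q => f Q * E Q) μ := integrable_cont μ hμ _ (hf.mul hEc)
  set H : M3 × M3 → ℝ := fun z =>
    (f z.1 - f z.2) * (Real.exp (δ * f z.1) - Real.exp (δ * f z.2)) * (A z.1 * A z.2) with hH
  have hHeq : H = fun z => (f z.1 * E z.1) * A z.2 - (f z.1 * A z.1) * E z.2
      - E z.1 * (f z.2 * A z.2) + A z.1 * (f z.2 * E z.2) := by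
    funext z
    simp only [hH, hE, hA, Real.exp_add]
    ring
  have hint : Integrable H (μ.prod μ) := by
    rw [hHeq]
    exact (((ifE.mul_prod iA).sub (ifA.mul_prod iE)).sub (iE.mul_prod ifA)).add (iA.mul_prod ifE)
  have hnonneg : ∀ z, 0 ≤ H z := by
    intro z
    refine mul_nonneg ?_ (mul_nonneg (Real.exp_pos _).le (Real.exp_pos _).le)
    rcases le_total (f z.1) (f z.2) with h | h
    · have he : Real.exp (δ * f z.1) ≤ Real.exp (δ * f z.2) :=
        Real.exp_le_exp.mpr (by nlinarith)
      nlinarith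
    · have he : Real.exp (δ * f z.2) ≤ Real.exp (δ * f z.1) :=
        Real.exp_le_exp.mpr (by nlinarith)
      nlinarith
  have hIH : ∫ z, H z ∂(μ.prod μ)
      = 2 * ((∫ Q, f Q * E Q ∂μ) * (∫ Q, A Q ∂μ) - (∫ Q, f Q * A Q ∂μ) * (∫ Q, E Q ∂μ)) := by
    have i1 : Integrable (fun z : M3 × M3 => f z.1 * E z.1 * A z.2) (μ.prod μ) := by
      have := ifE.mul_prod iA; simpa [mul_assoc] using this
    have i2 : Integrable (fun z : M3 × M3 => f z.1 * A z.1 * E z.2) (μ.prod μ) := by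
      have := ifA.mul_prod iE; simpa [mul_assoc] using this
    have i3 : Integrable (fun z : M3 × M3 => E z.1 * (f z.2 * A z.2)) (μ.prod μ) :=
      iE.mul_prod ifA
    have i4 : Integrable (fun z : M3 × M3 => A z.1 * (f z.2 * E z.2)) (μ.prod μ) :=
      iA.mul_prod ifE
    have i12 : Integrable (fun z : M3 × M3 =>
        f z.1 * E z.1 * A z.2 - f z.1 * A z.1 * E z.2) (μ.prod μ) := i1.sub i2
    have i123 : Integrable (fun z : M3 × M3 =>
        f z.1 * E z.1 * A z.2 - f z.1 * A z.1 * E z.2 - E z.1 * (f z.2 * A z.2)) (μ.prod μ) :=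
      i12.sub i3
    rw [hHeq]
    rw [integral_add i123 i4, integral_sub i12 i3, integral_sub i1 i2]
    have e1 : ∫ z : M3 × M3, f z.1 * E z.1 * A z.2 ∂(μ.prod μ)
        = (∫ Q, f Q * E Q ∂μ) * (∫ Q, A Q ∂μ) := by
      rw [← integral_prod_mul (fun Q => f Q * E Q) A]
    have e2 : ∫ z : M3 × M3, f z.1 * A z.1 * E z.2 ∂(μ.prod μ)
        = (∫ Q, f Q * A Q ∂μ) * (∫ Q, E Q ∂μ) := by
      rw [← integral_prod_mul (fun Q => f Q * A Q) E]
    have e3 : ∫ z : M3 × M3, E z.1 * (f z.2 * A z.2) ∂(μ.prod μ)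
        = (∫ Q, E Q ∂μ) * (∫ Q, f Q * A Q ∂μ) := integral_prod_mul E (fun Q => f Q * A Q)
    have e4 : ∫ z : M3 × M3, A z.1 * (f z.2 * E z.2) ∂(μ.prod μ)
        = (∫ Q, A Q ∂μ) * (∫ Q, f Q * E Q ∂μ) := integral_prod_mul A (fun Q => f Q * E Q)
    rw [e1, e2, e3, e4]
    ring
  have hpos : 0 < ∫ z, H z ∂(μ.prod μ) := by
    rw [integral_pos_iff_support_of_nonneg_ae (Filter.Eventually.of_forall hnonneg) hint]
    set c : ℝ := (f q₂ + f q₁) / 2 with hc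
    have hV₁ : IsOpen (f ⁻¹' Set.Ioi c) := hf.isOpen_preimage _ isOpen_Ioi
    have hV₂ : IsOpen (f ⁻¹' Set.Iio c) := hf.isOpen_preimage _ isOpen_Iio
    have hμ₁ : μ (f ⁻¹' Set.Ioi c) ≠ 0 :=
      haar_open_pos μ hμ hV₁ ⟨q₁, by simp [hc]; linarith, h₁⟩
    have hμ₂ : μ (f ⁻¹' Set.Iio c) ≠ 0 :=
      haar_open_pos μ hμ hV₂ ⟨q₂, by simp [hc]; linarith, h₂⟩
    have hsub : (f ⁻¹' Set.Ioi c) ×ˢ (f ⁻¹' Set.Iio c) ⊆ Function.support H := by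
      rintro ⟨x, y⟩ ⟨hx, hy⟩
      simp only [Set.mem_preimage, Set.mem_Ioi, Set.mem_Iio] at hx hy
      have h1 : 0 < f x - f y := by linarith
      have h2 : 0 < Real.exp (δ * f x) - Real.exp (δ * f y) := by
        simp only [sub_pos]
        exact Real.exp_lt_exp.mpr (by nlinarith)
      have : 0 < H (x, y) :=
        mul_pos (mul_pos h1 h2) (mul_pos (Real.exp_pos _) (Real.exp_pos _))
      exact this.ne'
    calc (0 : ENNReal) < μ (f ⁻¹' Set.Ioi c) * μ (f ⁻¹' Set.Iio c) := by
          exact lt_of_le_of_ne zero_le (Ne.symm (mul_ne_zero hμ₁ hμ₂))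
      _ = (μ.prod μ) ((f ⁻¹' Set.Ioi c) ×ˢ (f ⁻¹' Set.Iio c)) := (Measure.prod_prod _ _).symm
      _ ≤ (μ.prod μ) (Function.support H) := measure_mono hsub
  rw [hIH] at hpos
  linarith

lemma trace_diag (s : Fin 3 → ℝ) (Q : M3) :
    (Matrix.diagonal s * Q).trace = ∑ m, s m * Q m m := by
  simp [Matrix.trace, Matrix.diag, Matrix.mul_apply, Matrix.diagonal_apply,
    Finset.sum_ite_eq, Finset.mem_univ]

lemma main_core (μ : Measure M3) (hμ : IsHaarSO3 μ) (s s' : Fin 3 → ℝ) (i j k : Fin 3)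
    (hik : i ≠ k) (hjk : j ≠ k)
    (hsum3 : ∀ g : Fin 3 → ℝ, ∑ m, g m = g i + g j + g k)
    (hprod3 : ∀ g : Fin 3 → ℝ, ∏ m, g m = g i * g j * g k)
    (hk : s' k = s k) (hdiff : s' i - s' j = s i - s j)
    (hsum : s i + s j < s' i + s' j) :
    dS μ s i + dS μ s j < dS μ s' i + dS μ s' j := by
  set δ : ℝ := s' i - s i with hδdef
  have hδi : s' i = s i + δ := by rw [hδdef]; ring
  have hδj : s' j = s j + δ := by rw [hδdef]; linarith
  have hδpos : 0 < δ := by linarith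
  set f : M3 → ℝ := fun Q => Q i i + Q j j with hfdef
  set w : M3 → ℝ := fun Q => (Matrix.diagonal s * Q).trace with hwdef
  have hfc : Continuous f :=
    (continuous_id.matrix_elem i i).add (continuous_id.matrix_elem j j)
  have hwc : Continuous w := (continuous_const.matrix_mul continuous_id).matrix_trace
  have hw' : ∀ Q : M3, (Matrix.diagonal s' * Q).trace = w Q + δ * f Q := by
    intro Q
    simp only [hwdef, hfdef]
    rw [trace_diag, trace_diag, hsum3 (fun m => s' m * Q m m), hsum3 (fun m => s m * Q m m)]
    simp only [hδi, hδj, hk]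
    ring
  set q₂ : M3 := Matrix.diagonal (fun m => if m = k then 1 else -1) with hq₂def
  have hq₂ : q₂ ∈ SO3 := by
    constructor
    · rw [hq₂def, Matrix.diagonal_transpose, Matrix.diagonal_mul_diagonal]
      have : (fun m : Fin 3 => (if m = k then (1:ℝ) else -1) * (if m = k then 1 else -1))
          = fun _ => 1 := by
        funext m; split_ifs <;> norm_num
      rw [this, Matrix.diagonal_one]
    · rw [hq₂def, Matrix.det_diagonal, hprod3, if_neg hik, if_neg hjk, if_pos rfl]
      norm_num
  have hfq₂ : f q₂ = -2 := by
    rw [hfdef, hq₂def]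
    simp only [Matrix.diagonal_apply_eq, if_neg hik, if_neg hjk]
    norm_num
  have hfq₁ : f (1 : M3) = 2 := by
    rw [hfdef]; simp [Matrix.one_apply]; norm_num
  have hdsum : ∀ t : Fin 3 → ℝ, dS μ t i + dS μ t j
      = (∫ Q, f Q * Real.exp ((Matrix.diagonal t * Q).trace) ∂μ) / cS μ t := by
    intro t
    unfold dS pS
    have hdiv : ∀ a : Fin 3,
        (∫ Q, Q a a * (Real.exp ((Matrix.diagonal t * Q).trace) / cS μ t) ∂μ)
        = (∫ Q, Q a a * Real.exp ((Matrix.diagonal t * Q).trace) ∂μ) / cS μ t := by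
      intro a
      rw [← integral_div]
      congr 1; funext Q; ring
    rw [hdiv i, hdiv j, ← add_div]
    congr 1
    have htc : Continuous fun Q : M3 => Real.exp ((Matrix.diagonal t * Q).trace) :=
      ((continuous_const.matrix_mul continuous_id).matrix_trace).rexp
    rw [← integral_add
      (integrable_cont μ hμ (fun Q : M3 => Q i i * Real.exp ((Matrix.diagonal t * Q).trace)) ((continuous_id.matrix_elem i i).mul htc))
      (integrable_cont μ hμ (fun Q : M3 => Q j j * Real.exp ((Matrix.diagonal t * Q).trace)) ((continuous_id.matrix_elem j j).mul htc))]
    congr 1; funext Q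
    rw [hfdef]; ring
  rw [hdsum s, hdsum s']
  have hc : 0 < cS μ s := integral_exp_pos μ hμ w hwc
  have hrw' : (fun Q : M3 => Real.exp ((Matrix.diagonal s' * Q).trace))
      = fun Q => Real.exp (w Q + δ * f Q) := by
    funext Q; rw [hw' Q]
  have hc' : 0 < cS μ s' := by
    unfold cS
    rw [hrw']
    exact integral_exp_pos μ hμ _ (hwc.add (continuous_const.mul hfc))
  rw [div_lt_div_iff₀ hc hc']
  have e1 : cS μ s' = ∫ Q, Real.exp (w Q + δ * f Q) ∂μ := by unfold cS; rw [hrw']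
  have e2 : (∫ Q, f Q * Real.exp ((Matrix.diagonal s' * Q).trace) ∂μ)
      = ∫ Q, f Q * Real.exp (w Q + δ * f Q) ∂μ := by
    congr 1; funext Q; rw [hw' Q]
  have e3 : cS μ s = ∫ Q, Real.exp (w Q) ∂μ := rfl
  rw [e1, e2, e3]
  exact key μ hμ w f hwc hfc δ hδpos 1 q₂ one_mem_SO3 hq₂ (by rw [hfq₂, hfq₁]; norm_num)


/-- **Strict monotonicity of `dᵢ + dⱼ` in `sᵢ + sⱼ`**: if `(i,j,k)` is a cyclic
permutation of `(1,2,3)`, `S` and `S'` are properly ordered diagonal parameters with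
`s'ₖ = sₖ`, `s'ᵢ − s'ⱼ = sᵢ − sⱼ` and `s'ᵢ + s'ⱼ > sᵢ + sⱼ`, then
`dᵢ(S') + dⱼ(S') > dᵢ(S) + dⱼ(S)`. -/
theorem d_sum_strict_mono (μ : Measure M3) (hμ : IsHaarSO3 μ)
    (s s' : Fin 3 → ℝ)
    (hs1 : s 1 ≤ s 0) (hs2 : |s 2| ≤ s 1)
    (hs1' : s' 1 ≤ s' 0) (hs2' : |s' 2| ≤ s' 1)
    (i j k : Fin 3)
    (hcyc : (i, j, k) = ((0 : Fin 3), (1 : Fin 3), (2 : Fin 3)) ∨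
      (i, j, k) = ((1 : Fin 3), (2 : Fin 3), (0 : Fin 3)) ∨
      (i, j, k) = ((2 : Fin 3), (0 : Fin 3), (1 : Fin 3)))
    (hk : s' k = s k) (hdiff : s' i - s' j = s i - s j)
    (hsum : s i + s j < s' i + s' j) :
    dS μ s i + dS μ s j < dS μ s' i + dS μ s' j := by
  rcases hcyc with h | h | h <;>
    (rw [Prod.ext_iff, Prod.ext_iff] at h; obtain ⟨hi, hj, hk'⟩ := h;
     subst hi; subst hj; subst hk') <;>
  exact main_core μ hμ s s' _ _ _ (by decide) (by decide)
    (fun g => by rw [Fin.sum_univ_three]; try ring)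
    (fun g => by rw [Fin.prod_univ_three]; try ring)
    hk hdiff hsum
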